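/- Let z ∈ ℝ^{np} be partitioned into blocks z₁,…,z_n ∈ ℝᵖ, with z̄ = (1/n)∑ᵢ zᵢ and ẑᵢ = zᵢ − z̄. Let G^s = I_n ⊗ (Gᵃ − Gᵇ) + 𝟏_n𝟏_nᵀ ⊗ Gᵇ for symmetric Gᵃ, Gᵇ ∈ ℝ^{p×p}. Then zᵀG^s z = z̄ᵀ(nGᵃ + n(n−1)Gᵇ)z̄ + ∑ᵢ ẑᵢᵀ(Gᵃ − Gᵇ)ẑᵢ. -/

import Mathlib

open Matrix Kronecker

private lemma quad_symm {p : ℕ} (A : Matrix (Fin p) (Fin p) ℝ) (hA : A.IsSymm)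
    (u v : Fin p → ℝ) : u ⬝ᵥ A.mulVec v = v ⬝ᵥ A.mulVec u := by
  rw [dotProduct_mulVec, ← mulVec_transpose, hA, dotProduct_comm]

private lemma quad_sum {n p : ℕ} (A : Matrix (Fin p) (Fin p) ℝ) (u : Fin p → ℝ)
    (w : Fin n → Fin p → ℝ) :
    ∑ i, u ⬝ᵥ A.mulVec (w i) = u ⬝ᵥ A.mulVec (fun x => ∑ i, w i x) := by
  simp only [dotProduct, mulVec, Finset.mul_sum]
  rw [Finset.sum_comm]
  refine Finset.sum_congr rfl fun x _ => ?_
  rw [Finset.sum_comm]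
  

private lemma kron_expand {n p : ℕ} (A B : Matrix (Fin p) (Fin p) ℝ) (z : Fin n × Fin p → ℝ) :
    z ⬝ᵥ (((1 : Matrix (Fin n) (Fin n) ℝ) ⊗ₖ A +
        (Matrix.of fun _ _ : Fin n => (1 : ℝ)) ⊗ₖ B).mulVec z) =
    (∑ i, (fun x => z (i, x)) ⬝ᵥ A.mulVec (fun x => z (i, x))) +
      (fun x => ∑ i, z (i, x)) ⬝ᵥ B.mulVec (fun x => ∑ i, z (i, x)) := by
  simp only [dotProduct, mulVec, Fintype.sum_prod_type, Matrix.add_apply,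
    kroneckerMap_apply, Matrix.one_apply, Matrix.of_apply, add_mul, mul_add,
    Finset.sum_add_distrib, ite_mul, one_mul, zero_mul, Finset.mul_sum,
    Finset.sum_ite_eq, Finset.mem_univ, if_true]
  congr 1
  · refine Finset.sum_congr rfl fun i _ => Finset.sum_congr rfl fun x _ => ?_
    rw [Finset.sum_comm]
    simp [mul_ite, mul_zero, Finset.sum_ite_eq]
  · rw [Finset.sum_comm]
    refine Finset.sum_congr rfl fun b _ => ?_
    simp only [← Finset.mul_sum, ← Finset.sum_mul]
    rw [Finset.sum_comm]
    simp [Finset.mul_sum]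

theorem stmt_16 (n p : ℕ) (hn : 0 < n) (Ga Gb : Matrix (Fin p) (Fin p) ℝ)
    (hGa : Ga.IsSymm) (hGb : Gb.IsSymm) (z : Fin n × Fin p → ℝ) :
    z ⬝ᵥ (((1 : Matrix (Fin n) (Fin n) ℝ) ⊗ₖ (Ga - Gb) +
        (Matrix.of fun _ _ : Fin n => (1 : ℝ)) ⊗ₖ Gb).mulVec z) =
      (fun x => (n : ℝ)⁻¹ * ∑ i, z (i, x)) ⬝ᵥ
        (((n : ℝ) • Ga + ((n : ℝ) * ((n : ℝ) - 1)) • Gb).mulVec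
          (fun x => (n : ℝ)⁻¹ * ∑ i, z (i, x))) +
      ∑ i, (fun x => z (i, x) - (n : ℝ)⁻¹ * ∑ k, z (k, x)) ⬝ᵥ
        ((Ga - Gb).mulVec (fun x => z (i, x) - (n : ℝ)⁻¹ * ∑ k, z (k, x))) := by
  have hn' : (n : ℝ) ≠ 0 := Nat.cast_ne_zero.mpr hn.ne'
  set A : Matrix (Fin p) (Fin p) ℝ := Ga - Gb with hAdef
  have hA : A.IsSymm := hGa.sub hGb
  set s : Fin p → ℝ := fun x => ∑ i, z (i, x) with hs
  set zb : Fin p → ℝ := fun x => (n : ℝ)⁻¹ * ∑ i, z (i, x) with hzb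
  have hzb' : zb = (n : ℝ)⁻¹ • s := rfl
  set zi : Fin n → Fin p → ℝ := fun i x => z (i, x) with hzi
  rw [kron_expand]
  -- abbreviations for scalar quantities
  set a : ℝ := s ⬝ᵥ Ga.mulVec s with ha
  set b : ℝ := s ⬝ᵥ Gb.mulVec s with hb
  have hab : s ⬝ᵥ A.mulVec s = a - b := by
    rw [hAdef, sub_mulVec, dotProduct_sub]
  -- first RHS term
  have h2 : zb ⬝ᵥ (((n : ℝ) • Ga + ((n : ℝ) * ((n : ℝ) - 1)) • Gb).mulVec zb)
      = (n : ℝ)⁻¹ * a + ((n : ℝ)⁻¹ * ((n : ℝ) - 1)) * b := by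
    rw [hzb', add_mulVec, smul_mulVec, smul_mulVec, mulVec_smul,
      mulVec_smul, dotProduct_add, smul_dotProduct, dotProduct_smul,
      dotProduct_smul, dotProduct_smul, dotProduct_smul]
    simp only [smul_dotProduct, smul_eq_mul, ← ha, ← hb]
    field_simp
  -- cross term
  have h4 : ∑ i, zb ⬝ᵥ A.mulVec (zi i) = (n : ℝ)⁻¹ * (a - b) := by
    rw [quad_sum A zb zi, ← hab, hzb', smul_dotProduct, smul_eq_mul]
  have h5 : zb ⬝ᵥ A.mulVec zb = (n : ℝ)⁻¹ * ((n : ℝ)⁻¹ * (a - b)) := by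
    rw [hzb', smul_dotProduct, mulVec_smul, dotProduct_smul, hab]
    simp [mul_assoc]
  -- expand each summand of the second RHS sum
  have h3 : ∀ i, (fun x => z (i, x) - (n : ℝ)⁻¹ * ∑ k, z (k, x)) ⬝ᵥ
        (A.mulVec (fun x => z (i, x) - (n : ℝ)⁻¹ * ∑ k, z (k, x)))
      = zi i ⬝ᵥ A.mulVec (zi i) - 2 * (zb ⬝ᵥ A.mulVec (zi i)) + zb ⬝ᵥ A.mulVec zb := by
    intro i
    have e : (fun x => z (i, x) - (n : ℝ)⁻¹ * ∑ k, z (k, x)) = zi i - zb := rfl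
    rw [e, mulVec_sub, dotProduct_sub, sub_dotProduct, sub_dotProduct,
      quad_symm A hA (zi i) zb]
    ring
  simp only [h3]
  rw [Finset.sum_add_distrib, Finset.sum_sub_distrib, Finset.sum_const,
    Finset.card_univ, Fintype.card_fin, ← Finset.mul_sum, h4, h5, h2]
  change (∑ i, zi i ⬝ᵥ A *ᵥ zi i) + _ = _
  field_simp
  have hn2 : (n : ℝ) ^ 2 * (n : ℝ)⁻¹ ^ 2 = 1 := by field_simp
  linear_combination (b - a) * hn2
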